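/- Let H ∈ (1/2, 1). There exists a constant C_H > 0, depending only on H, such that for every integer n ≥ 1: | 2·n^{2H}·Γ(n+1) / ( Γ(n+2H)·(2n+2H) ) − 1 | ≤ C_H / n, where Γ denotes the Gamma function. -/
import Mathlib

open Real

lemma gautschiA {x s : ℝ} (hx : 0 < x) (hs0 : 0 ≤ s) (hs1 : s ≤ 1) :
    Real.Gamma (x + s) ≤ Real.Gamma x * x ^ s := by
  have hΓx := Real.Gamma_pos_of_pos hx
  have hΓxs := Real.Gamma_pos_of_pos (by linarith : (0:ℝ) < x + s)
  have hc := Real.convexOn_log_Gamma.2 (Set.mem_Ioi.2 hx)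
    (Set.mem_Ioi.2 (by linarith : (0:ℝ) < x + 1))
    (by linarith : (0:ℝ) ≤ 1 - s) hs0 (by ring)
  simp only [smul_eq_mul, Function.comp_apply] at hc
  have h1 : (1-s)*x + s*(x+1) = x + s := by ring
  rw [h1, Real.Gamma_add_one hx.ne', Real.log_mul hx.ne' hΓx.ne'] at hc
  have hlog : Real.log (Real.Gamma (x+s)) ≤ Real.log (Real.Gamma x) + s * Real.log x := by
    nlinarith [hc]
  calc Real.Gamma (x+s) = Real.exp (Real.log (Real.Gamma (x+s))) := (Real.exp_log hΓxs).symm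
    _ ≤ Real.exp (Real.log (Real.Gamma x) + s * Real.log x) := Real.exp_le_exp.2 hlog
    _ = Real.Gamma x * x ^ s := by
        rw [Real.exp_add, Real.exp_log hΓx, Real.rpow_def_of_pos hx, mul_comm s (Real.log x)]

lemma gautschiB {x s : ℝ} (hx : 0 < x) (hs0 : 0 ≤ s) (hs1 : s ≤ 1) :
    Real.Gamma (x + 1) ≤ Real.Gamma (x + s) * (x + s) ^ (1 - s) := by
  have hxs : (0:ℝ) < x + s := by linarith
  have hΓxs := Real.Gamma_pos_of_pos hxs
  have hΓx1 := Real.Gamma_pos_of_pos (by linarith : (0:ℝ) < x + 1)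
  have hc := Real.convexOn_log_Gamma.2 (Set.mem_Ioi.2 hxs)
    (Set.mem_Ioi.2 (by linarith : (0:ℝ) < x + s + 1))
    hs0 (by linarith : (0:ℝ) ≤ 1 - s) (by ring)
  simp only [smul_eq_mul, Function.comp_apply] at hc
  have h1 : s*(x+s) + (1-s)*(x+s+1) = x + 1 := by ring
  rw [h1, Real.Gamma_add_one hxs.ne', Real.log_mul hxs.ne' hΓxs.ne'] at hc
  have hlog : Real.log (Real.Gamma (x+1)) ≤
      Real.log (Real.Gamma (x+s)) + (1-s) * Real.log (x+s) := by nlinarith [hc]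
  calc Real.Gamma (x+1) = Real.exp (Real.log (Real.Gamma (x+1))) := (Real.exp_log hΓx1).symm
    _ ≤ Real.exp (Real.log (Real.Gamma (x+s)) + (1-s) * Real.log (x+s)) := Real.exp_le_exp.2 hlog
    _ = Real.Gamma (x+s) * (x+s) ^ (1-s) := by
        rw [Real.exp_add, Real.exp_log hΓxs, Real.rpow_def_of_pos hxs, mul_comm (1-s) (Real.log (x+s))]

lemma cubic_aux {x s : ℝ} (hx : 1 ≤ x) (hs0 : 0 < s) (hs1 : s < 1) :
    (x-3) * ((x+s)*(2*x+(s+1))) ≤ 2*x^3 := by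
  nlinarith [mul_nonneg (mul_nonneg (by linarith : (0:ℝ) ≤ x) (by linarith : (0:ℝ) ≤ x)) (by linarith : (0:ℝ) ≤ 5-3*s),
    mul_nonneg (by linarith : (0:ℝ) ≤ x) (by nlinarith : (0:ℝ) ≤ 8*s+3-s^2),
    mul_nonneg hs0.le (by linarith : (0:ℝ) ≤ s+1)]

theorem stirling_ratio_rate (H : ℝ) (hH : H ∈ Set.Ioo (1 / 2 : ℝ) 1) :
    ∃ C : ℝ, 0 < C ∧ ∀ n : ℕ, 1 ≤ n →
      |2 * (n : ℝ) ^ (2 * H) * Real.Gamma (n + 1)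
          / (Real.Gamma (n + 2 * H) * (2 * n + 2 * H)) - 1| ≤ C / n := by
  obtain ⟨hH1, hH2⟩ := hH
  refine ⟨3, by norm_num, fun n hn => ?_⟩
  set x : ℝ := (n : ℝ) with hxdef
  have hx1 : (1:ℝ) ≤ x := by rw [hxdef]; exact_mod_cast hn
  have hx0 : (0:ℝ) < x := by linarith
  set s : ℝ := 2*H - 1 with hsdef
  have hs0 : 0 < s := by rw [hsdef]; linarith
  have hs1 : s < 1 := by rw [hsdef]; linarith
  have h2H : 2*H = s + 1 := by rw [hsdef]; ring
  have hxs : (0:ℝ) < x + s := by linarith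
  have hG := Real.Gamma_pos_of_pos hxs
  set G : ℝ := Real.Gamma (x + s) with hGdef
  -- rewrite Gamma (x + 2H)
  have hGam : Real.Gamma (x + 2*H) = (x+s) * G := by
    rw [h2H, ← add_assoc, Real.Gamma_add_one hxs.ne']
  have hx2H : x ^ (2*H) = x * x ^ s := by
    rw [h2H, add_comm s 1, Real.rpow_add hx0, Real.rpow_one]
  have hΓ1 : Real.Gamma (x+1) = x * Real.Gamma x := Real.Gamma_add_one hx0.ne'
  have hΓxpos := Real.Gamma_pos_of_pos hx0
  set N : ℝ := 2 * x ^ (2*H) * Real.Gamma (x+1) with hNdef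
  have hDpos : 0 < Real.Gamma (x + 2*H) * (2*x + 2*H) := by
    rw [hGam]; have : (0:ℝ) < 2*x + 2*H := by nlinarith
    positivity
  -- lower bound on N
  have hNeq : N = 2*x^2 * (Real.Gamma x * x ^ s) := by rw [hNdef, hx2H, hΓ1]; ring
  clear_value x s G N
  have hA := gautschiA hx0 hs0.le hs1.le
  have hNlow : 2*x^2 * G ≤ N := by
    rw [hNeq, hGdef]
    exact mul_le_mul_of_nonneg_left hA (by positivity)
  -- upper bound on N
  have hB := gautschiB hx0 hs0.le hs1.le
  rw [← hGdef] at hB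
  have hpow : x ^ s * (x+s) ^ (1-s) ≤ x + s := by
    have h1 : x ^ s ≤ (x+s) ^ s := Real.rpow_le_rpow hx0.le (by linarith) hs0.le
    have h2 : (x+s) ^ s * (x+s) ^ (1-s) = x + s := by
      rw [← Real.rpow_add hxs]; norm_num
    calc x ^ s * (x+s) ^ (1-s) ≤ (x+s) ^ s * (x+s) ^ (1-s) :=
          mul_le_mul_of_nonneg_right h1 (Real.rpow_nonneg hxs.le _)
      _ = x + s := h2
  have hNup : N ≤ 2*x*(x+s) * G := by
    have step1 : N ≤ 2 * (x * x ^ s) * (G * (x+s) ^ (1-s)) := by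
      rw [hNdef, hx2H]
      have hnn : (0:ℝ) ≤ 2 * (x * x ^ s) := by positivity
      exact mul_le_mul_of_nonneg_left hB hnn
    have step2 : 2 * (x * x ^ s) * (G * (x+s) ^ (1-s)) = 2 * x * G * (x ^ s * (x+s) ^ (1-s)) := by
      ring
    calc N ≤ 2 * x * G * (x ^ s * (x+s) ^ (1-s)) := by rw [← step2]; exact step1
      _ ≤ 2 * x * G * (x + s) := by
          exact mul_le_mul_of_nonneg_left hpow (by positivity)
      _ = 2*x*(x+s) * G := by ring
  -- f ≤ 1
  have hub : N / (Real.Gamma (x + 2*H) * (2*x + 2*H)) ≤ 1 := by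
    rw [div_le_one hDpos, hGam, h2H]
    nlinarith [hG, hx0, hNup]
  -- f ≥ 1 - 3/x
  have hden : (0:ℝ) < (x+s)*(2*x+(s+1)) := by nlinarith
  have hq' : (x-3) * ((x+s)*(2*x+(s+1))) ≤ 2*x^3 := cubic_aux hx1 hs0 hs1
  have hq : (1:ℝ) - 3/x ≤ 2*x^2 / ((x+s)*(2*x+(s+1))) := by
    have hx3 : (1:ℝ) - 3/x = (x-3)/x := by field_simp
    rw [le_div_iff₀ hden, hx3, div_mul_eq_mul_div, div_le_iff₀ hx0]
    nlinarith [hq']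
  have hlb : 1 - 3/x ≤ N / (Real.Gamma (x + 2*H) * (2*x + 2*H)) := by
    have hcancel : 2*x^2 / ((x+s)*(2*x+(s+1))) = (2*x^2*G) / (Real.Gamma (x + 2*H) * (2*x + 2*H)) := by
      rw [hGam, h2H]
      rw [div_eq_div_iff hden.ne' (by rw [hGam, h2H] at hDpos; exact hDpos.ne')]
      ring
    calc (1:ℝ) - 3/x ≤ 2*x^2 / ((x+s)*(2*x+(s+1))) := hq
      _ = (2*x^2*G) / (Real.Gamma (x + 2*H) * (2*x + 2*H)) := hcancel
      _ ≤ N / (Real.Gamma (x + 2*H) * (2*x + 2*H)) := by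
          exact (div_le_div_iff_of_pos_right hDpos).mpr hNlow
  have h3x : (0:ℝ) < 3 / x := by positivity
  rw [abs_le]
  constructor
  · linarith
  · linarith
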